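/- Let a, b, c, d ∈ ℝ³ with ‖a − b‖ = ‖c − d‖ = 1, ‖b − c‖ ≤ δ, and ‖a − d‖ ≤ √2 + δ. Then the angle θ between the vectors a − c and d − b satisfies cos θ ≥ −Cδ for a constant C depending only on the configuration bounds (e.g., C = 10 works when δ ≤ 1/10). Equivalently, θ ≤ π/2 + C'√δ. -/

import Mathlib

/-- If ‖a−b‖ = ‖c−d‖ = 1, ‖b−c‖ ≤ δ and ‖a−d‖ ≤ √2 + δ with 0 ≤ δ ≤ 1/10, then
the angle θ between a−c and d−b satisfies cos θ ≥ −10δ. -/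
theorem stmt_18 (a b c d : EuclideanSpace ℝ (Fin 3)) (δ : ℝ)
    (hδ0 : 0 ≤ δ) (hδ : δ ≤ 1 / 10)
    (hab : ‖a - b‖ = 1) (hcd : ‖c - d‖ = 1)
    (hbc : ‖b - c‖ ≤ δ) (had : ‖a - d‖ ≤ Real.sqrt 2 + δ) :
    -(10 * δ) ≤ Real.cos (InnerProductGeometry.angle (a - c) (d - b)) := by
  set u := a - c with hu
  set v := d - b with hv
  have hcb : ‖c - b‖ ≤ δ := by rw [norm_sub_rev]; exact hbc
  have hun : (1 : ℝ) - δ ≤ ‖u‖ := by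
    have h1 : ‖a - b‖ ≤ ‖u‖ + ‖c - b‖ := by
      have : a - b = u + (c - b) := by rw [hu]; abel
      rw [this]; exact norm_add_le _ _
    linarith [hab ▸ h1]
  have hvn : (1 : ℝ) - δ ≤ ‖v‖ := by
    have h1 : ‖c - d‖ ≤ ‖c - b‖ + ‖v‖ := by
      have : c - d = (c - b) + -v := by rw [hv]; abel
      rw [this]
      calc ‖c - b + -v‖ ≤ ‖c - b‖ + ‖-v‖ := norm_add_le _ _
        _ = ‖c - b‖ + ‖v‖ := by rw [norm_neg]
    linarith [hcd ▸ h1]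
  have huv : ‖u - v‖ ≤ Real.sqrt 2 + 2 * δ := by
    have h1 : u - v = (a - d) + (b - c) := by rw [hu, hv]; abel
    calc ‖u - v‖ ≤ ‖a - d‖ + ‖b - c‖ := by rw [h1]; exact norm_add_le _ _
      _ ≤ Real.sqrt 2 + 2 * δ := by linarith
  have hs2 : Real.sqrt 2 ^ 2 = 2 := Real.sq_sqrt (by norm_num)
  have hs2' : Real.sqrt 2 ≤ 3 / 2 := by
    nlinarith [Real.sqrt_nonneg 2]
  have hs2nn : (0:ℝ) ≤ Real.sqrt 2 := Real.sqrt_nonneg 2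
  have hexp : ‖u - v‖ ^ 2 = ‖u‖ ^ 2 - 2 * inner ℝ u v + ‖v‖ ^ 2 := by
    rw [@norm_sub_sq_real]
  have hin : (inner ℝ u v : ℝ) ≥ (‖u‖ ^ 2 + ‖v‖ ^ 2 - (Real.sqrt 2 + 2 * δ) ^ 2) / 2 := by
    nlinarith [norm_nonneg (u - v)]
  have hupos : (0:ℝ) < ‖u‖ := by linarith
  have hvpos : (0:ℝ) < ‖v‖ := by linarith
  rw [InnerProductGeometry.cos_angle]
  rw [ge_iff_le, ← sub_nonneg] at hin
  rw [le_div_iff₀ (by positivity)]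
  nlinarith [mul_nonneg (sub_nonneg.2 hun) (sub_nonneg.2 hvn), mul_nonneg hδ0 (sub_nonneg.2 hun), mul_nonneg hδ0 (sub_nonneg.2 hvn), mul_nonneg hδ0 hδ0, mul_nonneg (mul_nonneg hδ0 hδ0) hδ0, mul_nonneg hδ0 (mul_nonneg (sub_nonneg.2 hun) (sub_nonneg.2 hvn))]
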